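/- For μ > 0, if z_μ > 0 satisfies 1/(2z_μ) = ∫_0^∞ (1+h)^{−μ} e^{−h z_μ} dh, then the maximum value of φ_μ equals e^{−z_μ} z_μ^μ / (2 Γ(μ+1)), where φ_μ(z) = (1/Γ(μ+1))·(z^μ e^{−z} − z^{2μ} ∫_z^∞ u^{−μ} e^{−u} du). -/

import Mathlib

open MeasureTheory

/-- `φ_μ(z) = (1/Γ(μ+1)) (z^μ e^{−z} − z^{2μ} ∫_z^∞ u^{−μ} e^{−u} du)`. -/
noncomputable def phiBessel (μ z : ℝ) : ℝ :=
  (1 / Real.Gamma (μ + 1))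
    * (z ^ μ * Real.exp (-z) - z ^ (2 * μ) * ∫ u in Set.Ioi z, u ^ (-μ) * Real.exp (-u))

open Set Real


lemma shiftIoi (f : ℝ → ℝ) (a c : ℝ) : ∫ x in Ioi a, f (x + c) = ∫ x in Ioi (a + c), f x := by
  rw [← integral_indicator measurableSet_Ioi, ← integral_indicator measurableSet_Ioi,
    ← integral_add_right_eq_self (fun x => Set.indicator (Ioi (a + c)) f x) c]
  congr 1
  ext x
  have : (a + c < x + c) ↔ (a < x) := by constructor <;> intro <;> linarith
  by_cases h : a < x <;> simp [Set.indicator_apply, mem_Ioi, h, this]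

lemma measf (μ : ℝ) : Measurable (fun u : ℝ => u ^ (-μ) * Real.exp (-u)) := by
  fun_prop

lemma expInt (z : ℝ) : IntegrableOn (fun u : ℝ => Real.exp (-u)) (Ioi z) := by
  simpa using exp_neg_integrableOn_Ioi z one_pos

lemma intf (μ z : ℝ) (hμ : 0 < μ) (hz : 0 < z) :
    IntegrableOn (fun u : ℝ => u ^ (-μ) * Real.exp (-u)) (Ioi z) := by
  have hg : IntegrableOn (fun u : ℝ => z ^ (-μ) * Real.exp (-u)) (Ioi z) :=
    (expInt z).const_mul _
  refine Integrable.mono hg ((measf μ).aestronglyMeasurable.restrict) ?_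
  filter_upwards [ae_restrict_mem measurableSet_Ioi] with u hu
  have hu' : z < u := hu
  rw [Real.norm_eq_abs, Real.norm_eq_abs, abs_mul, abs_mul,
    abs_of_nonneg (Real.exp_pos _).le, abs_of_nonneg (rpow_nonneg (by linarith) _),
    abs_of_nonneg (rpow_nonneg hz.le _)]
  exact mul_le_mul_of_nonneg_right
    (Real.rpow_le_rpow_of_nonpos hz hu'.le (by linarith)) (Real.exp_pos _).le

lemma subst (μ z : ℝ) (hμ : 0 < μ) (hz : 0 < z) :
    ∫ u in Ioi z, u ^ (-μ) * Real.exp (-u)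
      = z ^ (1 - μ) * Real.exp (-z)
        * ∫ h in Ioi (0:ℝ), (1 + h) ^ (-μ) * Real.exp (-h * z) := by
  have h1 := integral_comp_mul_left_Ioi (fun u : ℝ => u ^ (-μ) * Real.exp (-u)) 1 hz
  rw [mul_one] at h1
  have h2 : (∫ u in Ioi z, u ^ (-μ) * Real.exp (-u))
      = z * ∫ x in Ioi (1:ℝ), (z * x) ^ (-μ) * Real.exp (-(z * x)) := by
    rw [h1, smul_eq_mul, ← mul_assoc, mul_inv_cancel₀ hz.ne', one_mul]
  have h3 := shiftIoi (fun x : ℝ => (z * x) ^ (-μ) * Real.exp (-(z * x))) 0 1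
  rw [zero_add] at h3
  rw [h2, ← h3]
  have h4 : ∀ x ∈ Ioi (0:ℝ), (z * (x + 1)) ^ (-μ) * Real.exp (-(z * (x + 1)))
      = z ^ (-μ) * Real.exp (-z) * ((1 + x) ^ (-μ) * Real.exp (-x * z)) := by
    intro x hx
    have hx0 : (0:ℝ) < x := hx
    rw [Real.mul_rpow hz.le (by linarith), show -(z * (x + 1)) = -z + -(x * z) by ring,
      Real.exp_add, add_comm (1:ℝ) x]
    ring
  rw [setIntegral_congr_fun measurableSet_Ioi h4, integral_const_mul,
    show (1:ℝ) - μ = 1 + -μ by ring, Real.rpow_add hz, Real.rpow_one]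
  ring

lemma intg (μ c : ℝ) (hμ : 0 < μ) (hc : 0 < c) :
    IntegrableOn (fun t : ℝ => (1 + t / c) ^ (-μ) * Real.exp (-t)) (Ioi 0) := by
  have hm : Measurable (fun t : ℝ => (1 + t / c) ^ (-μ) * Real.exp (-t)) := by fun_prop
  refine Integrable.mono (expInt 0) hm.aestronglyMeasurable.restrict ?_
  filter_upwards [ae_restrict_mem measurableSet_Ioi] with t ht
  have ht0 : (0:ℝ) < t := ht
  have hb : (1:ℝ) ≤ 1 + t / c := by
    have : 0 ≤ t / c := div_nonneg ht0.le hc.le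
    linarith
  rw [Real.norm_eq_abs, Real.norm_eq_abs, abs_mul, abs_of_nonneg (rpow_nonneg (by linarith) _),
    abs_of_nonneg (Real.exp_pos _).le]
  calc (1 + t / c) ^ (-μ) * Real.exp (-t) ≤ 1 * Real.exp (-t) :=
        mul_le_mul_of_nonneg_right
          (Real.rpow_le_one_of_one_le_of_nonpos hb (by linarith)) (Real.exp_pos _).le
    _ = Real.exp (-t) := one_mul _

lemma scale (μ c : ℝ) (hc : 0 < c) :
    c * ∫ h in Ioi (0:ℝ), (1 + h) ^ (-μ) * Real.exp (-h * c)
      = ∫ t in Ioi (0:ℝ), (1 + t / c) ^ (-μ) * Real.exp (-t) := by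
  have h1 := integral_comp_mul_right_Ioi
    (fun t : ℝ => (1 + t / c) ^ (-μ) * Real.exp (-t)) 0 hc
  rw [zero_mul] at h1
  have h2 : ∀ x ∈ Ioi (0:ℝ),
      (1 + x * c / c) ^ (-μ) * Real.exp (-(x * c)) = (1 + x) ^ (-μ) * Real.exp (-x * c) := by
    intro x _
    rw [mul_div_cancel_right₀ x hc.ne', neg_mul]
  rw [← setIntegral_congr_fun measurableSet_Ioi h2, h1, smul_eq_mul, ← mul_assoc,
    mul_inv_cancel₀ hc.ne', one_mul]

lemma monoJ (μ a b : ℝ) (hμ : 0 < μ) (ha : 0 < a) (hab : a ≤ b) :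
    a * ∫ h in Ioi (0:ℝ), (1 + h) ^ (-μ) * Real.exp (-h * a)
      ≤ b * ∫ h in Ioi (0:ℝ), (1 + h) ^ (-μ) * Real.exp (-h * b) := by
  have hb : 0 < b := lt_of_lt_of_le ha hab
  rw [scale μ a ha, scale μ b hb]
  refine setIntegral_mono_on (intg μ a hμ ha) (intg μ b hμ hb) measurableSet_Ioi ?_
  intro t ht
  have ht0 : (0:ℝ) < t := ht
  have hdiv : t / b ≤ t / a := div_le_div_of_nonneg_left ht0.le ha hab
  have hpos : (0:ℝ) < 1 + t / b := by
    have : 0 ≤ t / b := div_nonneg ht0.le hb.le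
    linarith
  exact mul_le_mul_of_nonneg_right
    (Real.rpow_le_rpow_of_nonpos hpos (by linarith) (by linarith))
    (Real.exp_pos _).le

lemma hasDerivG (μ z : ℝ) (hμ : 0 < μ) (hz : 0 < z) :
    HasDerivAt (fun w => ∫ u in Ioi w, u ^ (-μ) * Real.exp (-u))
      (-(z ^ (-μ) * Real.exp (-z))) z := by
  set f : ℝ → ℝ := fun u => u ^ (-μ) * Real.exp (-u) with hf
  have ha : (0:ℝ) < z / 2 := by positivity
  set a : ℝ := z / 2
  have key : ∀ w : ℝ, 0 < w →
      ∫ u in Ioi w, f u = (∫ u in Ioi a, f u) - ∫ u in a..w, f u := by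
    intro w hw
    rcases le_or_gt a w with h | h
    · have hsplit : (∫ u in Ioc a w, f u) + ∫ u in Ioi w, f u = ∫ u in Ioi a, f u := by
        rw [← setIntegral_union (Set.Ioc_disjoint_Ioi le_rfl) measurableSet_Ioi
          ((intf μ a hμ ha).mono_set Set.Ioc_subset_Ioi_self) (intf μ w hμ hw),
          Set.Ioc_union_Ioi_eq_Ioi h]
      rw [intervalIntegral.integral_of_le h]
      linarith
    · have hsplit : (∫ u in Ioc w a, f u) + ∫ u in Ioi a, f u = ∫ u in Ioi w, f u := by
        rw [← setIntegral_union (Set.Ioc_disjoint_Ioi le_rfl) measurableSet_Ioi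
          ((intf μ w hμ hw).mono_set Set.Ioc_subset_Ioi_self) (intf μ a hμ ha),
          Set.Ioc_union_Ioi_eq_Ioi h.le]
      rw [intervalIntegral.integral_symm, intervalIntegral.integral_of_le h.le]
      linarith
  have hInt : IntervalIntegrable f volume a z := by
    refine (IntegrableOn.mono_set (intf μ (a/2) hμ (by positivity)) ?_).intervalIntegrable
    rw [Set.uIcc_of_le (half_le_self hz.le : a ≤ z)]
    intro x hx
    have h1 := hx.1
    have h2 : a = z / 2 := rfl
    simp only [Set.mem_Ioi, h2]
    linarith
  have hcont : ContinuousAt f z := by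
    exact ((Real.continuousAt_rpow_const z (-μ) (Or.inl hz.ne')).mul
      ((Real.continuous_exp.comp continuous_neg).continuousAt))
  have hd1 : HasDerivAt (fun w => ∫ u in a..w, f u) (f z) z :=
    intervalIntegral.integral_hasDerivAt_right hInt
      ((measf μ).stronglyMeasurable.stronglyMeasurableAtFilter) hcont
  have hd2 : HasDerivAt (fun w => (∫ u in Ioi a, f u) - ∫ u in a..w, f u) (-(f z)) z :=
    hd1.const_sub _
  refine hd2.congr_of_eventuallyEq ?_
  filter_upwards [eventually_gt_nhds hz] with w hw
  exact key w hw

lemma hasDerivF (μ z : ℝ) (hμ : 0 < μ) (hz : 0 < z) :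
    HasDerivAt
      (fun w => w ^ μ * Real.exp (-w) - w ^ (2*μ) * ∫ u in Ioi w, u ^ (-μ) * Real.exp (-u))
      (μ * z ^ (μ-1) * Real.exp (-z)
        - 2*μ * z ^ (2*μ-1) * ∫ u in Ioi z, u ^ (-μ) * Real.exp (-u)) z := by
  have h1 : HasDerivAt (fun w : ℝ => w ^ μ) (μ * z ^ (μ-1)) z :=
    Real.hasDerivAt_rpow_const (Or.inl hz.ne')
  have h1' : HasDerivAt (fun w : ℝ => w ^ (2*μ)) (2*μ * z ^ (2*μ-1)) z :=
    Real.hasDerivAt_rpow_const (Or.inl hz.ne')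
  have h2 : HasDerivAt (fun w : ℝ => Real.exp (-w)) (-Real.exp (-z)) z := by
    simpa using (hasDerivAt_neg z).exp
  have hG := hasDerivG μ z hμ hz
  have hd := (h1.mul h2).sub (h1'.mul hG)
  refine HasDerivAt.congr_deriv hd ?_
  have hzz : z ^ (2*μ) * z ^ (-μ) = z ^ μ := by
    rw [← Real.rpow_add hz]; congr 1; ring
  linear_combination (Real.exp (-z)) * hzz

noncomputable def Faux (μ : ℝ) : ℝ → ℝ := fun w =>
  w ^ μ * Real.exp (-w) - w ^ (2 * μ) * ∫ u in Set.Ioi w, u ^ (-μ) * Real.exp (-u)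

lemma phi_eq (μ z : ℝ) : phiBessel μ z = (1 / Real.Gamma (μ + 1)) * Faux μ z := rfl

lemma hasDerivFaux (μ z : ℝ) (hμ : 0 < μ) (hz : 0 < z) :
    HasDerivAt (Faux μ)
      (μ * z ^ (μ-1) * Real.exp (-z)
        - 2*μ * z ^ (2*μ-1) * ∫ u in Ioi z, u ^ (-μ) * Real.exp (-u)) z := by
  have h := hasDerivF μ z hμ hz
  exact h

lemma derivFaux_eq (μ z : ℝ) (hμ : 0 < μ) (hz : 0 < z) :
    deriv (Faux μ) z = μ * z ^ (μ-1) * Real.exp (-z)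
      * (1 - 2 * (z * ∫ h in Ioi (0:ℝ), (1 + h) ^ (-μ) * Real.exp (-h * z))) := by
  rw [(hasDerivFaux μ z hμ hz).deriv, subst μ z hμ hz]
  have e1 : z ^ (2*μ-1) * z ^ (1-μ) = z ^ μ := by
    rw [← Real.rpow_add hz]; congr 1; ring
  have e2 : z ^ (μ-1) * z = z ^ μ := by
    nth_rewrite 2 [← Real.rpow_one z]
    rw [← Real.rpow_add hz]; congr 1; ring
  set J := ∫ h in Ioi (0:ℝ), (1 + h) ^ (-μ) * Real.exp (-h * z)
  linear_combination (-2 * μ * Real.exp (-z) * J) * e1 + (2 * μ * Real.exp (-z) * J) * e2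

/-- For `μ > 0`, if `z_μ > 0` satisfies `1/(2z_μ) = ∫_0^∞ (1+h)^{−μ} e^{−h z_μ} dh`,
then the maximum value of `φ_μ` on `(0,∞)` equals `e^{−z_μ} z_μ^μ / (2 Γ(μ+1))`. -/
theorem max_value_phiBessel (μ : ℝ) (hμ : 0 < μ) (zμ : ℝ) (hz : 0 < zμ)
    (heq : 1 / (2 * zμ) = ∫ h in Set.Ioi (0 : ℝ), (1 + h) ^ (-μ) * Real.exp (-h * zμ)) :
    IsGreatest (phiBessel μ '' Set.Ioi 0)
      (Real.exp (-zμ) * zμ ^ μ / (2 * Real.Gamma (μ + 1))) := by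
  have hΓ : 0 < Real.Gamma (μ + 1) := Real.Gamma_pos_of_pos (by linarith)
  set I : ℝ → ℝ := fun w => ∫ h in Ioi (0:ℝ), (1 + h) ^ (-μ) * Real.exp (-h * w) with hI
  have hhalf : zμ * I zμ = 1/2 := by
    have h' : I zμ = 1 / (2 * zμ) := heq.symm
    rw [h']
    field_simp
  -- value at zμ
  have hval : phiBessel μ zμ = Real.exp (-zμ) * zμ ^ μ / (2 * Real.Gamma (μ + 1)) := by
    rw [phi_eq]
    have hGz : Faux μ zμ = zμ ^ μ * Real.exp (-zμ) / 2 := by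
      unfold Faux
      rw [subst μ zμ hμ hz]
      have e1 : zμ ^ (2*μ) * zμ ^ (1-μ) = zμ ^ μ * zμ := by
        rw [← Real.rpow_add hz, show 2*μ + (1-μ) = μ + 1 by ring, Real.rpow_add hz,
          Real.rpow_one]
      have : zμ ^ (2*μ) * (zμ ^ (1-μ) * Real.exp (-zμ) * I zμ)
          = zμ ^ μ * Real.exp (-zμ) * (zμ * I zμ) := by
        linear_combination (Real.exp (-zμ) * I zμ) * e1
      rw [show (zμ ^ (1 - μ) * Real.exp (-zμ) * ∫ h in Ioi (0:ℝ),
          (1 + h) ^ (-μ) * Real.exp (-h * zμ)) = zμ ^ (1-μ) * Real.exp (-zμ) * I zμ from rfl]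
        at *
      rw [this, hhalf]
      ring
    rw [hGz]
    ring
  constructor
  · exact ⟨zμ, Set.mem_Ioi.mpr hz, hval⟩
  · rintro y ⟨x, hx, rfl⟩
    rw [← hval, phi_eq, phi_eq]
    have hx0 : (0:ℝ) < x := hx
    have hF : Faux μ x ≤ Faux μ zμ := by
      rcases le_total x zμ with hxz | hxz
      · have hmono : MonotoneOn (Faux μ) (Icc x zμ) := by
          apply monotoneOn_of_deriv_nonneg (convex_Icc x zμ)
          · intro w hw
            exact (hasDerivFaux μ w hμ (lt_of_lt_of_le hx0 hw.1)).continuousAt.continuousWithinAt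
          · intro w hw
            rw [interior_Icc] at hw
            exact (hasDerivFaux μ w hμ (lt_trans hx0 hw.1)).differentiableAt.differentiableWithinAt
          · intro w hw
            rw [interior_Icc] at hw
            have hw0 : 0 < w := lt_trans hx0 hw.1
            rw [derivFaux_eq μ w hμ hw0]
            have hle : w * I w ≤ 1/2 := by
              rw [← hhalf]
              exact monoJ μ w zμ hμ hw0 hw.2.le
            have h1 : (0:ℝ) ≤ 1 - 2 * (w * I w) := by linarith
            have h2 : 0 < μ * w ^ (μ-1) * Real.exp (-w) :=
              mul_pos (mul_pos hμ (Real.rpow_pos_of_pos hw0 _)) (Real.exp_pos _)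
            exact mul_nonneg h2.le h1
        exact hmono ⟨le_rfl, hxz⟩ ⟨hxz, le_rfl⟩ hxz
      · have hanti : AntitoneOn (Faux μ) (Icc zμ x) := by
          apply antitoneOn_of_deriv_nonpos (convex_Icc zμ x)
          · intro w hw
            exact (hasDerivFaux μ w hμ (lt_of_lt_of_le hz hw.1)).continuousAt.continuousWithinAt
          · intro w hw
            rw [interior_Icc] at hw
            exact (hasDerivFaux μ w hμ (lt_trans hz hw.1)).differentiableAt.differentiableWithinAt
          · intro w hw
            rw [interior_Icc] at hw
            have hw0 : 0 < w := lt_trans hz hw.1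
            rw [derivFaux_eq μ w hμ hw0]
            have hge : 1/2 ≤ w * I w := by
              rw [← hhalf]
              exact monoJ μ zμ w hμ hz hw.1.le
            have h1 : 1 - 2 * (w * I w) ≤ 0 := by linarith
            have h2 : 0 < μ * w ^ (μ-1) * Real.exp (-w) :=
              mul_pos (mul_pos hμ (Real.rpow_pos_of_pos hw0 _)) (Real.exp_pos _)
            exact mul_nonpos_of_nonneg_of_nonpos h2.le h1
        exact hanti ⟨le_rfl, hxz⟩ ⟨hxz, le_rfl⟩ hxz
    have : (0:ℝ) ≤ 1 / Real.Gamma (μ + 1) := by positivity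
    exact mul_le_mul_of_nonneg_left hF this
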